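/- As k → ∞, the proportion of k-permutation matrices that are not scattered tends to 0; that is, the number of k-permutation matrices having an ⌈4·log₂ k / log₂ log₂ k⌉-repetition is o(k!). -/

import Mathlib

open Asymptotics

noncomputable section

/-- Number of 1-entries of a binary matrix. -/
def ones {n m : ℕ} (A : Fin n → Fin m → Bool) : ℕ :=
  Nat.card {p : Fin n × Fin m // A p.1 p.2 = true}

/-- Number of 0-entries of a binary matrix. -/
def zeros {n m : ℕ} (A : Fin n → Fin m → Bool) : ℕ :=
  Nat.card {p : Fin n × Fin m // A p.1 p.2 = false}

/-- `B` is contained in `A`: `B` can be obtained from `A` by deleting rows/columns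
and turning some 1-entries into 0-entries. -/
def containsB {a b n m : ℕ} (B : Fin a → Fin b → Bool) (A : Fin n → Fin m → Bool) : Prop :=
  ∃ f : Fin a → Fin n, ∃ g : Fin b → Fin m, StrictMono f ∧ StrictMono g ∧
    ∀ i j, B i j = true → A (f i) (g j) = true

/-- The permutation matrix of a permutation `σ`. -/
def permMat {k : ℕ} (σ : Equiv.Perm (Fin k)) : Fin k → Fin k → Bool :=
  fun i j => decide (σ i = j)

/-- `A` contains the permutation matrix of `σ`. -/
def containsP {k n m : ℕ} (σ : Equiv.Perm (Fin k)) (A : Fin n → Fin m → Bool) : Prop :=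
  containsB (permMat σ) A

/-- `ex(n,P)`: the maximum number of 1-entries in an `n × n` binary matrix avoiding
the permutation matrix of `σ`. -/
def exP {k : ℕ} (n : ℕ) (σ : Equiv.Perm (Fin k)) : ℕ :=
  sSup {c : ℕ | ∃ A : Fin n → Fin n → Bool, ¬ containsP σ A ∧ c = ones A}

/-- The number of (ordered) pairs of 1-entries of the permutation matrix of `σ`
whose distance vector is `(d, d')`. -/
def pairCount {k : ℕ} (σ : Equiv.Perm (Fin k)) (d d' : ℤ) : ℕ :=
  Nat.card {p : Fin k × Fin k //
    ((p.2).val : ℤ) - ((p.1).val : ℤ) = d ∧ ((σ p.2).val : ℤ) - ((σ p.1).val : ℤ) = d'}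


open Filter Finset


section Comb

variable {k : ℕ}

/-- `x` is the start of a pair with distance vector `(d,d')` in `σ`. -/
def Qp (σ : Equiv.Perm (Fin k)) (d d' : ℤ) (x : Fin k) : Prop :=
  ∃ y : Fin k, (y.val : ℤ) = x.val + d ∧ ((σ y).val : ℤ) = (σ x).val + d'

instance (σ : Equiv.Perm (Fin k)) (d d' : ℤ) : DecidablePred (Qp σ d d') := fun x => by
  unfold Qp; infer_instance

def Tset (σ : Equiv.Perm (Fin k)) (d d' : ℤ) : Finset (Fin k) :=
  univ.filter (Qp σ d d')

lemma pairCount_eq (σ : Equiv.Perm (Fin k)) (d d' : ℤ) :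
    pairCount σ d d' = (Tset σ d d').card := by
  rw [← Fintype.card_coe, ← Nat.card_eq_fintype_card, pairCount]
  apply Nat.card_congr
  have hmem : ∀ p : {p : Fin k × Fin k //
      ((p.2).val : ℤ) - ((p.1).val : ℤ) = d ∧ ((σ p.2).val : ℤ) - ((σ p.1).val : ℤ) = d'},
      p.1.1 ∈ Tset σ d d' := by
    rintro ⟨⟨a1, a2⟩, h1, h2⟩
    simp only [Tset, mem_filter, mem_univ, true_and]
    dsimp only at h1 h2
    exact ⟨a2, by omega, by omega⟩
  refine Equiv.ofBijective (fun p => ⟨p.1.1, hmem p⟩) ⟨?_, ?_⟩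
  · rintro ⟨p, hp1, hp2⟩ ⟨q, hq1, hq2⟩ h
    simp only [Subtype.mk.injEq] at h
    have h' : p.1.val = q.1.val := congrArg Fin.val h
    refine Subtype.ext (Prod.ext h (Fin.ext ?_))
    show p.2.val = q.2.val
    omega
  · rintro ⟨x, hx⟩
    obtain ⟨y, hy, hy'⟩ := (mem_filter.mp hx).2
    refine ⟨⟨(x, y), ?_, ?_⟩, rfl⟩ <;> dsimp only <;> omega

def imgS (S : Finset (Fin k)) (d : ℤ) : Finset (Fin k) :=
  univ.filter (fun x => ∃ z ∈ S, (x.val : ℤ) = z.val + d)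

def msr (d : ℤ) (x : Fin k) : ℕ := if 0 < d then x.val else k - x.val

lemma msr_lt {d : ℤ} (hd : d ≠ 0) {x z : Fin k} (h : (x.val : ℤ) = z.val + d) :
    msr d z < msr d x := by
  have hx := x.isLt
  have hz := z.isLt
  unfold msr
  split_ifs with h0 <;> omega

lemma chain_eq {d d' : ℤ} (hd : d ≠ 0) {S : Finset (Fin k)} {σ τ : Equiv.Perm (Fin k)}
    (hσ : ∀ x ∈ S, Qp σ d d' x) (hτ : ∀ x ∈ S, Qp τ d d' x)
    (hag : ∀ x ∈ S \ imgS S d, σ x = τ x) :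
    ∀ x ∈ S ∪ imgS S d, σ x = τ x := by
  suffices H : ∀ n (x : Fin k), msr d x < n → x ∈ S ∪ imgS S d → σ x = τ x from
    fun x hx => H (msr d x + 1) x (Nat.lt_succ_self _) hx
  intro n
  induction n with
  | zero => exact fun x hm _ => absurd hm (Nat.not_lt_zero _)
  | succ n ih =>
    intro x hm hx
    by_cases hsrc : x ∈ S \ imgS S d
    · exact hag x hsrc
    · have hximg : x ∈ imgS S d := by
        rcases mem_union.mp hx with h | h
        · by_contra hni; exact hsrc (mem_sdiff.mpr ⟨h, hni⟩)
        · exact h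
      obtain ⟨z, hzS, hzd⟩ := (mem_filter.mp hximg).2
      obtain ⟨y1, hy1, hy1'⟩ := hσ z hzS
      have hxy1 : y1 = x := Fin.ext (by omega)
      rw [hxy1] at hy1'
      obtain ⟨y2, hy2, hy2'⟩ := hτ z hzS
      have hxy2 : y2 = x := Fin.ext (by omega)
      rw [hxy2] at hy2'
      have hz' : σ z = τ z :=
        ih z (by have := msr_lt hd hzd; omega) (mem_union_left _ hzS)
      rw [hz'] at hy1'
      exact Fin.ext (by omega)

lemma img_card {d : ℤ} {S : Finset (Fin k)}
    (hrange : ∀ z ∈ S, ∃ y : Fin k, (y.val : ℤ) = z.val + d) :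
    (imgS S d).card = S.card := by
  classical
  set f : Fin k → Fin k := fun z =>
    if h : ∃ y : Fin k, (y.val : ℤ) = z.val + d then h.choose else z with hf
  have hfspec : ∀ z : Fin k, (h : ∃ y : Fin k, (y.val : ℤ) = z.val + d) →
      ((f z).val : ℤ) = z.val + d := by
    intro z h
    rw [hf]
    simp only [dif_pos h]
    exact h.choose_spec
  have himg : imgS S d = S.image f := by
    ext x
    simp only [imgS, mem_filter, mem_univ, true_and, mem_image]
    constructor
    · rintro ⟨z, hz, hx⟩
      refine ⟨z, hz, ?_⟩
      have hex : ∃ y : Fin k, (y.val : ℤ) = z.val + d := ⟨x, hx⟩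
      have := hfspec z hex
      exact Fin.ext (by omega)
    · rintro ⟨z, hz, rfl⟩
      exact ⟨z, hz, hfspec z (hrange z hz)⟩
  rw [himg, Finset.card_image_of_injOn]
  intro z1 h1 z2 h2 hzz
  have e1 := hfspec z1 (hrange z1 h1)
  have e2 := hfspec z2 (hrange z2 h2)
  rw [hzz] at e1
  exact Fin.ext (by omega)

end Comb

lemma orderIsoOfFin_congr {α : Type*} [LinearOrder α] {s t : Finset α} (hst : s = t)
    {m : ℕ} (hs : s.card = m) (ht : t.card = m) (i : Fin m) :
    ((s.orderIsoOfFin hs i : α)) = t.orderIsoOfFin ht i := by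
  subst hst; rfl

lemma NS {k : ℕ} {d d' : ℤ} (hd : d ≠ 0) (S : Finset (Fin k)) :
    (univ.filter (fun σ : Equiv.Perm (Fin k) => ∀ x ∈ S, Qp σ d d' x)).card
      ≤ k ^ (S \ imgS S d).card * (k - S.card - (S \ imgS S d).card).factorial := by
  classical
  rcases (univ.filter (fun σ : Equiv.Perm (Fin k) => ∀ x ∈ S, Qp σ d d' x)).eq_empty_or_nonempty
    with he | ⟨σ₀, hσ₀⟩
  · rw [he, card_empty]; exact Nat.zero_le _
  have hσ₀' : ∀ x ∈ S, Qp σ₀ d d' x := (mem_filter.mp hσ₀).2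
  have hrange : ∀ z ∈ S, ∃ y : Fin k, (y.val : ℤ) = z.val + d := by
    intro z hz
    obtain ⟨y, hy, -⟩ := hσ₀' z hz
    exact ⟨y, hy⟩
  set V : Finset (Fin k) := S ∪ imgS S d with hVdef
  set c : ℕ := (S \ imgS S d).card with hcdef
  have hVcard : V.card = S.card + c := by
    rw [hVdef, ← card_sdiff_add_card S (imgS S d), img_card hrange]; omega
  have hVk : V.card ≤ k := by
    have := card_le_card (subset_univ V)
    simpa using this
  set m : ℕ := k - V.card with hmdef
  have hm' : k - S.card - c = m := by omega
  have hVc : (Vᶜ).card = m := by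
    rw [card_compl, Fintype.card_fin]
  set a : Fin m ≃o {x // x ∈ Vᶜ} := (Vᶜ).orderIsoOfFin hVc with hadef
  have hWc : ∀ σ : Equiv.Perm (Fin k), ((V.image σ)ᶜ).card = m := by
    intro σ
    rw [card_compl, Fintype.card_fin, card_image_of_injective _ σ.injective]
  have hmem : ∀ (σ : Equiv.Perm (Fin k)) (i : Fin m), σ (a i) ∈ (V.image σ)ᶜ := by
    intro σ i
    rw [mem_compl]
    intro hcon
    obtain ⟨v, hv, hveq⟩ := mem_image.mp hcon
    have : v = ((a i : {x // x ∈ Vᶜ}) : Fin k) := σ.injective hveq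
    have hai := (a i).2
    rw [mem_compl] at hai
    exact hai (this ▸ hv)
  set e : Equiv.Perm (Fin k) → (Fin m ↪ Fin m) := fun σ =>
    ⟨fun i => ((V.image σ)ᶜ.orderIsoOfFin (hWc σ)).symm ⟨σ (a i), hmem σ i⟩, by
      intro i j hij
      have h2 := congrArg (((V.image σ)ᶜ.orderIsoOfFin (hWc σ)) : _ → _) hij
      simp only [OrderIso.apply_symm_apply] at h2
      have h3 : σ (a i) = σ (a j) := congrArg Subtype.val h2
      have h4 : ((a i : {x // x ∈ Vᶜ}) : Fin k) = a j := σ.injective h3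
      exact a.injective (Subtype.ext h4)⟩ with hedef
  have key : (univ.filter (fun σ : Equiv.Perm (Fin k) => ∀ x ∈ S, Qp σ d d' x)).card
      ≤ (univ : Finset (({x // x ∈ S \ imgS S d} → Fin k) × (Fin m ↪ Fin m))).card := by
    apply card_le_card_of_injOn (fun σ => (fun x => σ x.val, e σ)) (fun _ _ => mem_univ _)
    intro σ hσ τ hτ heq
    have hσ' : ∀ x ∈ S, Qp σ d d' x := (mem_filter.mp (by exact hσ)).2
    have hτ' : ∀ x ∈ S, Qp τ d d' x := (mem_filter.mp (by exact hτ)).2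
    have h1 : ∀ x ∈ S \ imgS S d, σ x = τ x := by
      intro x hx
      exact congrFun (congrArg Prod.fst heq) ⟨x, hx⟩
    have hV' : ∀ x ∈ V, σ x = τ x := chain_eq hd hσ' hτ' h1
    have hWeq : V.image σ = V.image τ := Finset.image_congr (fun x hx => hV' x (by exact hx))
    have he' : e σ = e τ := congrArg Prod.snd heq
    have h2 : ∀ i : Fin m, σ (a i) = τ (a i) := by
      intro i
      have hi : e σ i = e τ i := by rw [he']
      have hs : ((V.image σ)ᶜ.orderIsoOfFin (hWc σ) (e σ i) : Fin k) = σ (a i) := by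
        simp only [hedef, Function.Embedding.coeFn_mk, OrderIso.apply_symm_apply]
        exact congrArg Subtype.val (OrderIso.apply_symm_apply _ _)
      have ht : ((V.image τ)ᶜ.orderIsoOfFin (hWc τ) (e τ i) : Fin k) = τ (a i) := by
        simp only [hedef, Function.Embedding.coeFn_mk, OrderIso.apply_symm_apply]
        exact congrArg Subtype.val (OrderIso.apply_symm_apply _ _)
      rw [← hs, ← ht, hi]
      exact orderIsoOfFin_congr (by rw [hWeq]) (hWc σ) (hWc τ) (e τ i)
    have h3 : ∀ x ∈ Vᶜ, σ x = τ x := by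
      intro x hx
      have := h2 (a.symm ⟨x, hx⟩)
      rwa [OrderIso.apply_symm_apply] at this
    apply Equiv.ext
    intro x
    by_cases hx : x ∈ V
    · exact hV' x hx
    · exact h3 x (mem_compl.mpr hx)
  rw [card_univ, Fintype.card_prod, Fintype.card_embedding_eq, Fintype.card_fin,
    Nat.descFactorial_self, Fintype.card_fun, Fintype.card_fin, Fintype.card_coe] at key
  rw [hm']
  exact key

lemma arith_aux (k r : ℕ) (hk : 4 * r ≤ k) :
    ∀ c, c ≤ r → k ^ c * (k - r - c).factorial ≤ 2 ^ c * (k - r).factorial := by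
  intro c
  induction c with
  | zero => simp
  | succ c ih =>
    intro h
    have ih' := ih (by omega)
    have hfac : (k - r - c).factorial = (k - r - c) * (k - r - (c + 1)).factorial := by
      have h1 : k - r - c = (k - r - (c + 1)) + 1 := by omega
      rw [h1, Nat.factorial_succ]
    have hkey : k * (k - r - (c + 1)).factorial ≤ 2 * (k - r - c).factorial := by
      rw [hfac, ← mul_assoc]
      exact Nat.mul_le_mul_right _ (by omega)
    calc k ^ (c + 1) * (k - r - (c + 1)).factorial
        = k ^ c * (k * (k - r - (c + 1)).factorial) := by ring
      _ ≤ k ^ c * (2 * (k - r - c).factorial) := Nat.mul_le_mul_left _ hkey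
      _ = 2 * (k ^ c * (k - r - c).factorial) := by ring
      _ ≤ 2 * (2 ^ c * (k - r).factorial) := Nat.mul_le_mul_left _ ih'
      _ = 2 ^ (c + 1) * (k - r).factorial := by ring

lemma NS2 {k r : ℕ} {d d' : ℤ} (hd : d ≠ 0) (hk : 4 * r ≤ k) {S : Finset (Fin k)}
    (hS : S.card = r) :
    (univ.filter (fun σ : Equiv.Perm (Fin k) => ∀ x ∈ S, Qp σ d d' x)).card
      ≤ 2 ^ r * (k - r).factorial := by
  refine le_trans (NS hd S) ?_
  set c := (S \ imgS S d).card with hc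
  have hcr : c ≤ r := by
    rw [hc, ← hS]
    exact card_le_card sdiff_subset
  calc k ^ c * (k - S.card - c).factorial
      = k ^ c * (k - r - c).factorial := by rw [hS]
    _ ≤ 2 ^ c * (k - r).factorial := arith_aux k r hk c hcr
    _ ≤ 2 ^ r * (k - r).factorial :=
        Nat.mul_le_mul_right _ (Nat.pow_le_pow_right (by norm_num) hcr)

lemma perDD {k r : ℕ} (d d' : ℤ) (hk : 4 * r ≤ k) :
    (univ.filter (fun σ : Equiv.Perm (Fin k) => d ≠ 0 ∧ r ≤ pairCount σ d d')).card
      ≤ k.choose r * (2 ^ r * (k - r).factorial) := by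
  classical
  by_cases hd : d = 0
  · subst hd
    simp
  calc (univ.filter (fun σ : Equiv.Perm (Fin k) => d ≠ 0 ∧ r ≤ pairCount σ d d')).card
      ≤ ((univ.powersetCard r).biUnion (fun S =>
          univ.filter (fun σ : Equiv.Perm (Fin k) => ∀ x ∈ S, Qp σ d d' x))).card := by
        apply card_le_card
        intro σ hσ
        obtain ⟨-, -, hpc⟩ := mem_filter.mp hσ
        have hT : r ≤ (Tset σ d d').card := by rw [← pairCount_eq]; exact hpc
        obtain ⟨S, hSsub, hScard⟩ := Finset.exists_subset_card_eq hT
        refine mem_biUnion.mpr ⟨S, mem_powersetCard_univ.mpr hScard, ?_⟩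
        exact mem_filter.mpr ⟨mem_univ _, fun x hx => (mem_filter.mp (hSsub hx)).2⟩
    _ ≤ ∑ S ∈ univ.powersetCard r,
          (univ.filter (fun σ : Equiv.Perm (Fin k) => ∀ x ∈ S, Qp σ d d' x)).card :=
        card_biUnion_le
    _ ≤ ∑ _S ∈ univ.powersetCard r, 2 ^ r * (k - r).factorial := by
        apply Finset.sum_le_sum
        intro S hS
        exact NS2 hd hk (mem_powersetCard_univ.mp hS)
    _ = (univ.powersetCard r).card * (2 ^ r * (k - r).factorial) := by
        rw [Finset.sum_const, smul_eq_mul]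
    _ = k.choose r * (2 ^ r * (k - r).factorial) := by
        rw [Finset.card_powersetCard, card_univ, Fintype.card_fin]

theorem countA (k r : ℕ) (hr : 1 ≤ r) (hk : 4 * r ≤ k) :
    Nat.card {σ : Equiv.Perm (Fin k) // ∃ d d' : ℤ, ¬(d = 0 ∧ d' = 0) ∧ r ≤ pairCount σ d d'}
        * r.factorial
      ≤ (2 * k + 1) ^ 2 * 2 ^ r * k.factorial := by
  classical
  have hrk : r ≤ k := by omega
  have h1 : Nat.card {σ : Equiv.Perm (Fin k) //
      ∃ d d' : ℤ, ¬(d = 0 ∧ d' = 0) ∧ r ≤ pairCount σ d d'}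
      = (univ.filter (fun σ : Equiv.Perm (Fin k) =>
          ∃ d d' : ℤ, ¬(d = 0 ∧ d' = 0) ∧ r ≤ pairCount σ d d')).card := by
    rw [Nat.card_eq_fintype_card, Fintype.card_subtype]
  set D : Finset (ℤ × ℤ) := Finset.Icc (-(k : ℤ)) k ×ˢ Finset.Icc (-(k : ℤ)) k with hD
  have hDcard : D.card = (2 * k + 1) ^ 2 := by
    rw [hD, Finset.card_product, Int.card_Icc]
    have : ((k : ℤ) + 1 - -(k : ℤ)).toNat = 2 * k + 1 := by omega
    rw [this]; ring
  have hsub : (univ.filter (fun σ : Equiv.Perm (Fin k) =>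
        ∃ d d' : ℤ, ¬(d = 0 ∧ d' = 0) ∧ r ≤ pairCount σ d d'))
      ⊆ D.biUnion (fun p => univ.filter
          (fun σ : Equiv.Perm (Fin k) => p.1 ≠ 0 ∧ r ≤ pairCount σ p.1 p.2)) := by
    intro σ hσ
    obtain ⟨d, d', hne, hpc⟩ := (mem_filter.mp hσ).2
    have hT : r ≤ (Tset σ d d').card := by rw [← pairCount_eq]; exact hpc
    obtain ⟨x, hx⟩ := Finset.card_pos.mp (lt_of_lt_of_le hr hT)
    obtain ⟨y, hy, hy'⟩ := (mem_filter.mp hx).2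
    have hxk := x.isLt
    have hyk := y.isLt
    have hsxk := (σ x).isLt
    have hsyk := (σ y).isLt
    have hd : d ≠ 0 := by
      rintro rfl
      have hxy : y = x := Fin.ext (by omega)
      rw [hxy] at hy'
      exact hne ⟨rfl, by omega⟩
    refine mem_biUnion.mpr ⟨(d, d'), ?_, mem_filter.mpr ⟨mem_univ _, hd, hpc⟩⟩
    rw [hD, Finset.mem_product]
    constructor <;> rw [Finset.mem_Icc] <;> omega
  calc (Nat.card {σ : Equiv.Perm (Fin k) //
        ∃ d d' : ℤ, ¬(d = 0 ∧ d' = 0) ∧ r ≤ pairCount σ d d'}) * r.factorial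
      = (univ.filter (fun σ : Equiv.Perm (Fin k) =>
          ∃ d d' : ℤ, ¬(d = 0 ∧ d' = 0) ∧ r ≤ pairCount σ d d')).card * r.factorial := by
        rw [h1]
    _ ≤ (D.biUnion (fun p => univ.filter
          (fun σ : Equiv.Perm (Fin k) => p.1 ≠ 0 ∧ r ≤ pairCount σ p.1 p.2))).card
          * r.factorial := Nat.mul_le_mul_right _ (card_le_card hsub)
    _ ≤ (∑ p ∈ D, (univ.filter
          (fun σ : Equiv.Perm (Fin k) => p.1 ≠ 0 ∧ r ≤ pairCount σ p.1 p.2)).card)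
          * r.factorial := Nat.mul_le_mul_right _ card_biUnion_le
    _ ≤ (∑ _p ∈ D, k.choose r * (2 ^ r * (k - r).factorial)) * r.factorial := by
        refine Nat.mul_le_mul_right _ (Finset.sum_le_sum fun p _ => perDD p.1 p.2 hk)
    _ = (2 * k + 1) ^ 2 * 2 ^ r * (k.choose r * r.factorial * (k - r).factorial) := by
        rw [Finset.sum_const, smul_eq_mul, hDcard]; ring
    _ = (2 * k + 1) ^ 2 * 2 ^ r * k.factorial := by
        rw [Nat.choose_mul_factorial_mul_factorial hrk]


open Filter

lemma pow_le_fact_mul_exp : ∀ n : ℕ, (n : ℝ) ^ n ≤ (n.factorial : ℝ) * Real.exp n := by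
  intro n
  induction n with
  | zero => simp
  | succ n ih =>
    rcases Nat.eq_zero_or_pos n with rfl | hn
    · have h := Real.add_one_le_exp (1 : ℝ)
      simp only [Nat.factorial]
      push_cast
      nlinarith [Real.exp_pos (1:ℝ)]
    · have hn0 : (0:ℝ) < n := by exact_mod_cast hn
      have hstep : ((n:ℝ) + 1) ^ n ≤ (n:ℝ) ^ n * Real.exp 1 := by
        have h2 : (1 + 1/(n:ℝ)) ≤ Real.exp (1/(n:ℝ)) := by
          have := Real.add_one_le_exp (1/(n:ℝ)); linarith
        have h3 : ((n:ℝ) + 1) = n * (1 + 1/n) := by field_simp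
        calc ((n:ℝ)+1)^n = (n:ℝ)^n * (1+1/n)^n := by rw [h3, mul_pow]
          _ ≤ (n:ℝ)^n * (Real.exp (1/n))^n := by
              apply mul_le_mul_of_nonneg_left (pow_le_pow_left₀ (by positivity) h2 n)
              positivity
          _ = (n:ℝ)^n * Real.exp 1 := by
              rw [← Real.exp_nat_mul]
              congr 1
              field_simp
      have hpos1 : (0:ℝ) ≤ (n:ℝ) + 1 := by positivity
      calc ((n+1:ℕ):ℝ) ^ (n+1) = ((n:ℝ)+1) * ((n:ℝ)+1)^n := by push_cast; ring
        _ ≤ ((n:ℝ)+1) * ((n:ℝ)^n * Real.exp 1) := mul_le_mul_of_nonneg_left hstep hpos1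
        _ ≤ ((n:ℝ)+1) * (((n.factorial : ℝ) * Real.exp n) * Real.exp 1) := by
            apply mul_le_mul_of_nonneg_left _ hpos1
            exact mul_le_mul_of_nonneg_right ih (le_of_lt (Real.exp_pos 1))
        _ = ((n+1).factorial : ℝ) * Real.exp ((n+1 : ℕ) : ℝ) := by
            rw [Nat.factorial_succ]
            push_cast
            rw [Real.exp_add]
            ring

def rr (k : ℕ) : ℕ := ⌈4 * Real.logb 2 k / Real.logb 2 (Real.logb 2 k)⌉₊

lemma ev0 : ∀ᶠ x : ℝ in atTop, Real.log x ≤ 0.1 * x := by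
  have h := Asymptotics.isLittleO_iff.mp Real.isLittleO_log_id_atTop (by norm_num : (0:ℝ) < 0.1)
  filter_upwards [h, eventually_ge_atTop (1:ℝ)] with x hx h1
  have h2 : |Real.log x| ≤ 0.1 * |x| := by simpa [Real.norm_eq_abs] using hx
  rw [abs_of_nonneg (by linarith : (0:ℝ) ≤ x)] at h2
  exact le_trans (le_abs_self _) h2

lemma evP : ∀ᶠ u : ℝ in atTop, Real.log (u + 0.45) ≤ 0.2 * u - 2.7 := by
  filter_upwards [ev0, eventually_ge_atTop (40:ℝ)] with u h1 h40
  have h2 : Real.log (u + 0.45) ≤ Real.log (2 * u) :=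
    Real.log_le_log (by linarith) (by linarith)
  have h3 : Real.log (2 * u) = Real.log 2 + Real.log u :=
    Real.log_mul (by norm_num) (by linarith)
  have h4 : Real.log 2 < 0.6931471808 := Real.log_two_lt_d9
  linarith

set_option maxHeartbeats 2000000 in
lemma evMain : ∀ᶠ k : ℕ in atTop,
    1 ≤ rr k ∧ 4 * rr k ≤ k ∧
      ((2 * k + 1) ^ 2 * 2 ^ rr k * k : ℝ) ≤ ((rr k).factorial : ℝ) := by
  have hcast : Tendsto (fun k : ℕ => (k:ℝ)) atTop atTop := tendsto_natCast_atTop_atTop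
  have hlog : Tendsto (fun k : ℕ => Real.log k) atTop atTop :=
    Real.tendsto_log_atTop.comp hcast
  have hloglog : Tendsto (fun k : ℕ => Real.log (Real.log k)) atTop atTop :=
    Real.tendsto_log_atTop.comp hlog
  filter_upwards [hcast.eventually (eventually_ge_atTop (16:ℝ)),
    hlog.eventually (eventually_ge_atTop (16:ℝ)),
    hloglog.eventually (eventually_ge_atTop (40:ℝ)),
    hloglog.eventually evP,
    hcast.eventually ev0] with k hx16 hlx16 hu40 hP hxlog
  set lx : ℝ := Real.log (k:ℝ) with hlxdef
  set u : ℝ := Real.log lx with hudef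
  have hx0 : (0:ℝ) < (k:ℝ) := by linarith
  have hlx0 : (0:ℝ) < lx := by linarith
  have hu0 : (0:ℝ) < u := by linarith
  have hl2a : 0.6931471803 < Real.log 2 := Real.log_two_gt_d9
  have hl2b : Real.log 2 < 0.6931471808 := Real.log_two_lt_d9
  have hl20 : (0:ℝ) < Real.log 2 := by linarith
  have hll2u : Real.log (Real.log 2) ≤ -0.3 := by
    have := Real.log_le_sub_one_of_pos hl20
    linarith
  have hll2l : -0.45 ≤ Real.log (Real.log 2) := by
    have h1 : Real.log (Real.log 2)⁻¹ ≤ (Real.log 2)⁻¹ - 1 :=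
      Real.log_le_sub_one_of_pos (by positivity)
    rw [Real.log_inv] at h1
    have hinv : (Real.log 2)⁻¹ * Real.log 2 = 1 := inv_mul_cancel₀ (ne_of_gt hl20)
    have h2 : (Real.log 2)⁻¹ ≤ 1.4428 := by nlinarith
    linarith
  set w : ℝ := Real.log (lx / Real.log 2) with hwdef
  have hw_eq : w = u - Real.log (Real.log 2) := by
    rw [hwdef, Real.log_div (ne_of_gt hlx0) (ne_of_gt hl20)]
  have hw1 : u + 0.3 ≤ w := by rw [hw_eq]; linarith
  have hw2 : w ≤ u + 0.45 := by rw [hw_eq]; linarith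
  have hw0 : (0:ℝ) < w := by linarith
  have hrrk : rr k = ⌈4 * lx / w⌉₊ := by
    unfold rr
    congr 1
    simp only [Real.logb]
    rw [← hlxdef, ← hwdef]
    field_simp
  have hR : 4 * lx / w ≤ ((rr k : ℕ) : ℝ) := by
    rw [hrrk]; exact Nat.le_ceil _
  have hr1 : 1 ≤ rr k := by
    rw [hrrk, Nat.one_le_ceil_iff]; positivity
  set R : ℝ := ((rr k : ℕ) : ℝ) with hRdef
  have hR1 : (1:ℝ) ≤ R := by rw [hRdef]; exact_mod_cast hr1
  have hceil : R < 4 * lx / w + 1 := by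
    rw [hRdef, hrrk]; exact Nat.ceil_lt_add_one (by positivity)
  have hrk4 : 4 * rr k ≤ k := by
    have h1 : 4 * lx / w ≤ lx / 10 := by
      rw [div_le_div_iff₀ hw0 (by norm_num)]
      nlinarith
    have h2 : 4 * R ≤ (k:ℝ) := by nlinarith
    rw [hRdef] at h2
    exact_mod_cast h2
  have hlogρ : Real.log (4 * lx / w) = Real.log 4 + Real.log lx - Real.log w := by
    rw [Real.log_div (by positivity) (ne_of_gt hw0), Real.log_mul (by norm_num) (ne_of_gt hlx0)]
  have hlog4 : 1.38 ≤ Real.log 4 := by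
    have h4 : Real.log 4 = 2 * Real.log 2 := by
      rw [show (4:ℝ) = 2^2 by norm_num, Real.log_pow]; push_cast; ring
    linarith
  have hlogw : Real.log w ≤ 0.2 * u - 2.7 := by
    have h1 : Real.log w ≤ Real.log (u + 0.45) := Real.log_le_log hw0 hw2
    linarith
  have hlnR : 0.8 * w + 2 + 1.7 ≤ Real.log R := by
    have h1 : Real.log (4*lx/w) ≤ Real.log R := Real.log_le_log (by positivity) hR
    linarith
  have hprod : 3 * lx + 3.2 ≤ R * (Real.log R - 1.7) := by
    have h1 : (4 * lx / w) * (0.8 * w + 2) ≤ R * (Real.log R - 1.7) :=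
      mul_le_mul hR (by linarith) (by linarith) (by linarith)
    have h4 : 4 * lx / w * (0.8 * w + 2) = 3.2 * lx + 4 * lx / w * 2 := by
      field_simp; ring
    have h3 : 0 ≤ 4 * lx / w * 2 := by positivity
    linarith
  have hlog2x : Real.log (2*(k:ℝ)+1) ≤ 1.2 + lx := by
    have h1 : Real.log (2*(k:ℝ)+1) ≤ Real.log (3*(k:ℝ)) :=
      Real.log_le_log (by linarith) (by linarith)
    rw [Real.log_mul (by norm_num) (ne_of_gt hx0)] at h1
    have hlog3 : Real.log 3 ≤ 1.2 := by
      have h2 : Real.log 3 = Real.log 2 + Real.log 1.5 := by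
        rw [← Real.log_mul (by norm_num) (by norm_num)]; norm_num
      have h3 : Real.log 1.5 ≤ 0.5 := by
        have := Real.log_le_sub_one_of_pos (by norm_num : (0:ℝ) < 1.5); linarith
      linarith
    linarith
  have hfact : R ^ (rr k) ≤ ((rr k).factorial : ℝ) * Real.exp R :=
    pow_le_fact_mul_exp (rr k)
  have hmain : ((2*(k:ℝ)+1)^2 * 2^(rr k) * (k:ℝ)) * Real.exp R ≤ R ^ (rr k) := by
    have hpos : (0:ℝ) < ((2*(k:ℝ)+1)^2 * 2^(rr k) * (k:ℝ)) * Real.exp R := by positivity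
    have hRpos : (0:ℝ) < R ^ (rr k) := by positivity
    rw [← Real.log_le_log_iff hpos hRpos]
    rw [Real.log_mul (by positivity) (by positivity),
      Real.log_mul (by positivity) (by positivity),
      Real.log_mul (by positivity) (by positivity),
      Real.log_pow, Real.log_pow, Real.log_pow, Real.log_exp]
    push_cast
    nlinarith [hprod, hl2b, hR1, hlog2x]
  have hfinal : ((2*(k:ℝ)+1)^2 * 2^(rr k) * (k:ℝ)) ≤ ((rr k).factorial : ℝ) := by
    have := le_trans hmain hfact
    exact le_of_mul_le_mul_right (by linarith [this]) (Real.exp_pos R)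
  refine ⟨hr1, hrk4, ?_⟩
  exact_mod_cast hfinal


/-- The number of `k`-permutation matrices having a
`⌈4·log₂ k / log₂ log₂ k⌉`-repetition is `o(k!)` as `k → ∞`. -/
theorem stmt2 :
    (fun k : ℕ => (Nat.card {σ : Equiv.Perm (Fin k) //
        ∃ d d' : ℤ, ¬ (d = 0 ∧ d' = 0) ∧
          ⌈4 * Real.logb 2 k / Real.logb 2 (Real.logb 2 k)⌉₊ ≤ pairCount σ d d'} : ℝ))
      =o[Filter.atTop] (fun k : ℕ => (k.factorial : ℝ)) := by

  rw [Asymptotics.isLittleO_iff]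
  intro c hc
  have hcast : Tendsto (fun k : ℕ => (k:ℝ)) atTop atTop := tendsto_natCast_atTop_atTop
  filter_upwards [evMain, hcast.eventually (eventually_ge_atTop (1/c))] with k hk hkc
  obtain ⟨hr1, hrk4, hreal⟩ := hk
  have hnat : (2*k+1)^2 * 2^(rr k) * k ≤ (rr k).factorial := by exact_mod_cast hreal
  have hA := countA k (rr k) hr1 hrk4
  set N := Nat.card {σ : Equiv.Perm (Fin k) //
    ∃ d d' : ℤ, ¬(d = 0 ∧ d' = 0) ∧ rr k ≤ pairCount σ d d'} with hN
  have h2 : N * k ≤ k.factorial := by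
    have h3 : (N * k) * (rr k).factorial ≤ k.factorial * (rr k).factorial := by
      calc (N*k)*(rr k).factorial = (N * (rr k).factorial) * k := by ring
        _ ≤ ((2*k+1)^2 * 2^(rr k) * k.factorial) * k := Nat.mul_le_mul_right _ hA
        _ = ((2*k+1)^2 * 2^(rr k) * k) * k.factorial := by ring
        _ ≤ (rr k).factorial * k.factorial := Nat.mul_le_mul_right _ hnat
        _ = k.factorial * (rr k).factorial := by ring
    exact Nat.le_of_mul_le_mul_right h3 (Nat.factorial_pos _)
  show ‖(N : ℝ)‖ ≤ c * ‖(k.factorial : ℝ)‖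
  rw [Real.norm_natCast, Real.norm_natCast]
  have h1c : (1:ℝ) ≤ c * k := by
    calc (1:ℝ) = c * (1/c) := by field_simp
      _ ≤ c * k := mul_le_mul_of_nonneg_left hkc hc.le
  have h2' : (N:ℝ) * k ≤ (k.factorial : ℝ) := by exact_mod_cast h2
  have hN0 : (0:ℝ) ≤ (N:ℝ) := Nat.cast_nonneg _
  calc (N:ℝ) = (N:ℝ) * 1 := by ring
    _ ≤ (N:ℝ) * (c*k) := mul_le_mul_of_nonneg_left h1c hN0
    _ = c * ((N:ℝ)*k) := by ring
    _ ≤ c * (k.factorial : ℝ) := mul_le_mul_of_nonneg_left h2' hc.le
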